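/- Let π > 0 and define j : [0, ∞) → ℝ by j(x) = x √(4x + π² x⁴) − π x³. Then j is strictly increasing on [0, ∞), j(0) = 0, j(x) → 2/π as x → ∞, and consequently 0 ≤ j(x) < 2/π for every x ≥ 0. -/

import Mathlib

noncomputable section

/-- The function `j(x) = x√(4x + π²x⁴) − πx³`. -/
def jfun (π x : ℝ) : ℝ := x * Real.sqrt (4 * x + π ^ 2 * x ^ 4) - π * x ^ 3

lemma jfun_key (π : ℝ) (hπ : 0 < π) (x : ℝ) (hx : 0 < x) :
    jfun π x = 4 / (π + Real.sqrt (4 / x ^ 3 + π ^ 2)) := by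
  have ht : (0:ℝ) ≤ 4 / x ^ 3 + π ^ 2 := by positivity
  set t := 4 / x ^ 3 + π ^ 2 with htdef
  have hs : Real.sqrt t ^ 2 = t := Real.sq_sqrt ht
  have hsq : Real.sqrt (4 * x + π ^ 2 * x ^ 4) = x ^ 2 * Real.sqrt t := by
    rw [← Real.sqrt_sq (by positivity : (0:ℝ) ≤ x ^ 2), ← Real.sqrt_mul (by positivity)]
    congr 1
    field_simp [htdef]
    rw [htdef, mul_add, mul_div_assoc', mul_div_cancel_left₀ (4:ℝ) (by positivity : x ^ 3 ≠ 0)]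
  have hd : 0 < π + Real.sqrt t := by positivity
  have h1 : (Real.sqrt t - π) * (Real.sqrt t + π) = 4 / x ^ 3 := by
    have h2 : Real.sqrt t * Real.sqrt t = t := Real.mul_self_sqrt ht
    calc (Real.sqrt t - π) * (Real.sqrt t + π) = Real.sqrt t * Real.sqrt t - π ^ 2 := by ring
      _ = 4 / x ^ 3 := by rw [h2, htdef]; ring
  unfold jfun
  rw [hsq, eq_div_iff (by linarith : π + Real.sqrt t ≠ 0)]
  have : x ^ 3 * ((Real.sqrt t - π) * (Real.sqrt t + π)) = 4 := by
    rw [h1]; field_simp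
  nlinarith [this]

lemma jfun_sqrt_gt (π : ℝ) (hπ : 0 < π) (x : ℝ) (hx : 0 < x) :
    π < Real.sqrt (4 / x ^ 3 + π ^ 2) := by
  rw [show (4 / x ^ 3 + π ^ 2 : ℝ) = (4 / x ^ 3 + π ^ 2 : ℝ) from rfl]
  have h4 : (0:ℝ) < 4 / x ^ 3 := by positivity
  have := Real.sq_sqrt (show (0:ℝ) ≤ 4 / x ^ 3 + π ^ 2 by positivity)
  nlinarith [Real.sqrt_nonneg (4 / x ^ 3 + π ^ 2)]

/-- For `π > 0`, the function `j` is strictly increasing on `[0,∞)`, `j(0) = 0`,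
`j(x) → 2/π` as `j(x) → 2/π` as `x → ∞`, and `0 ≤ j(x) < 2/π` for every `x ≥ 0`. -/
theorem stmt12 (π : ℝ) (hπ : 0 < π) :
    StrictMonoOn (jfun π) (Set.Ici 0) ∧
    jfun π 0 = 0 ∧
    Filter.Tendsto (jfun π) Filter.atTop (nhds (2 / π)) ∧
    ∀ x : ℝ, 0 ≤ x → 0 ≤ jfun π x ∧ jfun π x < 2 / π := by
  have hj0 : jfun π 0 = 0 := by simp [jfun]
  have hpos : ∀ x : ℝ, 0 < x → 0 < jfun π x := by
    intro x hx
    rw [jfun_key π hπ x hx]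
    positivity
  have hmono : StrictMonoOn (jfun π) (Set.Ici 0) := by
    intro x hx y hy hxy
    rcases (Set.mem_Ici.mp hx).eq_or_lt with h | h
    · rw [← h, hj0]
      exact hpos y (h ▸ hxy)
    · rw [jfun_key π hπ x h, jfun_key π hπ y (h.trans hxy)]
      have hsy : (0:ℝ) ≤ Real.sqrt (4 / y ^ 3 + π ^ 2) := Real.sqrt_nonneg _
      apply div_lt_div_of_pos_left (by norm_num) (by positivity)
      have h1 : 4 / y ^ 3 + π ^ 2 < 4 / x ^ 3 + π ^ 2 := by
        have : 4 / y ^ 3 < 4 / x ^ 3 := by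
          exact div_lt_div_of_pos_left (by norm_num) (pow_pos h 3)
            (pow_lt_pow_left₀ hxy h.le (by norm_num))
        linarith
      have hy' : 0 < y := h.trans hxy
      have := Real.sqrt_lt_sqrt (by positivity) h1
      linarith
  have htend : Filter.Tendsto (jfun π) Filter.atTop (nhds (2 / π)) := by
    have h1 : Filter.Tendsto (fun x : ℝ => 4 / x ^ 3 + π ^ 2) Filter.atTop
        (nhds (0 + π ^ 2)) := by
      apply Filter.Tendsto.add_const
      exact Filter.Tendsto.div_atTop tendsto_const_nhds (Filter.tendsto_pow_atTop (by norm_num))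
    have h2 : Filter.Tendsto (fun x : ℝ => 4 / (π + Real.sqrt (4 / x ^ 3 + π ^ 2)))
        Filter.atTop (nhds (4 / (π + Real.sqrt (0 + π ^ 2)))) := by
      apply Filter.Tendsto.div tendsto_const_nhds
      · exact Filter.Tendsto.const_add _
          ((Real.continuous_sqrt.continuousAt.tendsto).comp h1)
      · rw [zero_add, Real.sqrt_sq hπ.le]
        positivity
    have hval : 4 / (π + Real.sqrt (0 + π ^ 2)) = 2 / π := by
      rw [zero_add, Real.sqrt_sq hπ.le]
      field_simp
      ring
    rw [hval] at h2
    apply h2.congr'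
    filter_upwards [Filter.eventually_gt_atTop 0] with x hx
    exact (jfun_key π hπ x hx).symm
  refine ⟨hmono, hj0, htend, ?_⟩
  intro x hx
  rcases hx.eq_or_lt with h | h
  · rw [← h, hj0]
    constructor
    · rfl
    · positivity
  · refine ⟨(hpos x h).le, ?_⟩
    rw [jfun_key π hπ x h]
    have hgt := jfun_sqrt_gt π hπ x h
    rw [div_lt_div_iff₀ (by positivity) hπ]
    nlinarith
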